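/- arXiv:1507.05278 — 4 statements merged into one kernel-verified Lean document; each statement's English description precedes it below -/
import Mathlib

section
/- Let S be a set and R ⊆ S × D(S) a relation from states to finitely supported probability distributions. Then for all μ, ν ∈ D(S), μ is related to ν by the lifting of R if and only if there exist a finite index set I, probabilities p_i ∈ [0,1] with ∑_{i∈I} p_i = 1, states s_i ∈ S and distributions ν_i ∈ D(S) such that s_i R ν_i for every i ∈ I, μ = ∑_{i∈I} p_i · δ_{s_i}, and ν = ∑_{i∈I} p_i · ν_i. -/
/-- A finitely supported probability distribution over `S`. -/
structure ProbDist (S : Type) where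
  f : S → ℝ
  nonneg : ∀ s, 0 ≤ f s
  finSupp : (Function.support f).Finite
  sum_one : ∑ᶠ s, f s = 1

/-- The point distribution assigning probability 1 to `s`. -/
noncomputable def ProbDist.point {S : Type} (s : S) : ProbDist S where
  f := Set.indicator {s} (fun _ => (1 : ℝ))
  nonneg t := Set.indicator_nonneg (fun _ _ => zero_le_one) t
  finSupp := (Set.finite_singleton s).subset (by
    intro t ht
    by_contra h
    exact ht (Set.indicator_of_notMem h _))
  sum_one := by
    rw [finsum_eq_single _ s]
    · simp
    · intro x hx
      simp [Set.indicator_of_notMem, hx]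

/-- The lifting of a relation `R ⊆ S × D(S)` to `D(S) × D(S)`:
the smallest relation containing `(δ_s, ν)` whenever `R s ν`, and closed under
finite convex combinations. -/
inductive ProbDist.Lift {S : Type} (R : S → ProbDist S → Prop) :
    ProbDist S → ProbDist S → Prop
  | basic {s : S} {ν : ProbDist S} : R s ν → ProbDist.Lift R (ProbDist.point s) ν
  | lin {n : ℕ} (p : Fin n → ℝ) (μs νs : Fin n → ProbDist S)
      (hp : ∀ i, p i ∈ Set.Icc (0 : ℝ) 1) (hpsum : ∑ i, p i = 1)
      (h : ∀ i, ProbDist.Lift R (μs i) (νs i)) {μ ν : ProbDist S}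
      (hμ : ∀ s, μ.f s = ∑ i, p i * (μs i).f s)
      (hν : ∀ s, ν.f s = ∑ i, p i * (νs i).f s) :
      ProbDist.Lift R μ ν

/-- Lifting of a relation `R ⊆ S × S` on states: first form
`R̂ = {(s, δ_t) : s R t} ⊆ S × D(S)`, then lift. -/
def ProbDist.LiftRel {S : Type} (R : S → S → Prop) : ProbDist S → ProbDist S → Prop :=
  ProbDist.Lift (fun s ν => ∃ t, R s t ∧ ν = ProbDist.point t)

/-- Characterisation of the lifted relation: `μ lift(R) ν` holds iff `μ` and `ν` arise
as matching convex combinations `μ = ∑ᵢ pᵢ·δ_{sᵢ}` and `ν = ∑ᵢ pᵢ·νᵢ` with `sᵢ R νᵢ`. -/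
theorem lift_iff_convex_decomposition {S : Type} (R : S → ProbDist S → Prop)
    (μ ν : ProbDist S) :
    ProbDist.Lift R μ ν ↔
      ∃ (n : ℕ) (p : Fin n → ℝ) (ss : Fin n → S) (νs : Fin n → ProbDist S),
        (∀ i, p i ∈ Set.Icc (0 : ℝ) 1) ∧ (∑ i, p i = 1) ∧
        (∀ i, R (ss i) (νs i)) ∧
        (∀ t, μ.f t = ∑ i, p i * (ProbDist.point (ss i)).f t) ∧
        (∀ t, ν.f t = ∑ i, p i * (νs i).f t) := by
  constructor
  · intro h
    induction h with
    | @basic s ν hR =>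
      exact ⟨1, fun _ => 1, fun _ => s, fun _ => ν,
        fun _ => ⟨zero_le_one, le_refl 1⟩, by simp, fun _ => hR, by simp, by simp⟩
    | @lin n p μs νs hp hpsum h μ ν hμ hν ih =>
      choose m q ss' νs' hq hqsum hR hμ' hν' using ih
      let I := Σ i : Fin n, Fin (m i)
      let e : Fin (Fintype.card I) ≃ I := (Fintype.equivFin I).symm
      have key : ∀ g : (i : Fin n) → Fin (m i) → ℝ,
          ∑ k, p (e k).1 * q (e k).1 (e k).2 * g (e k).1 (e k).2
            = ∑ i, p i * ∑ j, q i j * g i j := by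
        intro g
        refine (Fintype.sum_equiv e _ (fun x : I => p x.1 * q x.1 x.2 * g x.1 x.2)
          fun k => rfl).trans ?_
        rw [← Finset.univ_sigma_univ, Finset.sum_sigma]
        simp [Finset.mul_sum, mul_assoc]
      refine ⟨Fintype.card I, fun k => p (e k).1 * q (e k).1 (e k).2,
        fun k => ss' (e k).1 (e k).2, fun k => νs' (e k).1 (e k).2, ?_, ?_, ?_, ?_, ?_⟩
      · intro k
        exact ⟨mul_nonneg (hp _).1 (hq _ _).1,
          mul_le_one₀ (hp _).2 (hq _ _).1 (hq _ _).2⟩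
      · have := key (fun _ _ => 1)
        simpa [hqsum, hpsum] using this
      · intro k; exact hR _ _
      · intro t
        have := key (fun i j => (ProbDist.point (ss' i j)).f t)
        rw [hμ t]
        rw [this]
        exact Finset.sum_congr rfl fun i _ => by rw [hμ' i t]
      · intro t
        have := key (fun i j => (νs' i j).f t)
        rw [hν t]
        rw [this]
        exact Finset.sum_congr rfl fun i _ => by rw [hν' i t]
  · rintro ⟨n, p, ss, νs', hp, hpsum, hR, hμ, hν⟩
    exact ProbDist.Lift.lin p (fun i => ProbDist.point (ss i)) νs' hp hpsum
      (fun i => ProbDist.Lift.basic (hR i)) hμ hν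
end

section
/- Let S be a set and R ⊆ S × D(S) a relation from states to finitely supported probability distributions. If the point distribution δ_s is related to μ by the lifting of R, then there exist a finite index set I, probabilities p_i ∈ [0,1] with ∑_{i∈I} p_i = 1, and distributions μ_i ∈ D(S) such that s R μ_i for each i ∈ I and μ = ∑_{i∈I} p_i·μ_i. -/
open Classical in
lemma ProbDist.point_f {S : Type} (s t : S) :
    (ProbDist.point s).f t = if t = s then 1 else 0 := by
  classical
  by_cases h : t = s <;> simp [ProbDist.point, h]

lemma aux_decomp {S : Type} (R : S → ProbDist S → Prop) {ν μ : ProbDist S}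
    (h : ProbDist.Lift R ν μ) :
    ∀ s : S, (∀ t, ν.f t = (ProbDist.point s).f t) →
    ∃ (n : ℕ) (p : Fin n → ℝ) (μs : Fin n → ProbDist S),
      (∀ i, p i ∈ Set.Icc (0 : ℝ) 1) ∧ (∑ i, p i = 1) ∧
      (∀ i, R s (μs i)) ∧
      (∀ t, μ.f t = ∑ i, p i * (μs i).f t) := by
  induction h with
  | @basic s' ν' hr =>
    intro s hs
    have hss : s' = s := by
      have := hs s'
      simp [ProbDist.point_f] at this
      by_contra hne
      exact hne this
    subst hss
    exact ⟨1, fun _ => 1, fun _ => ν', by simp, by simp, fun _ => hr, fun t => by simp⟩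
  | @lin n p μs νs hp hpsum hl μ0 ν0 hμ hν ih =>
    intro s hs
    -- each μs i with positive weight equals point s
    have key : ∀ i, 0 < p i → ∀ t, (μs i).f t = (ProbDist.point s).f t := by
      intro i hi t
      rcases eq_or_ne t s with rfl | hts
      · -- off-s mass of μs i is 0, so f s = 1
        have hzero : ∀ u, u ≠ t → (μs i).f u = 0 := by
          intro u hu
          have hsum0 : ∑ j, p j * (μs j).f u = 0 := by
            rw [← hμ, hs, ProbDist.point_f, if_neg hu]
          have := (Finset.sum_eq_zero_iff_of_nonneg
            (fun j _ => mul_nonneg (hp j).1 ((μs j).nonneg u))).mp hsum0 i (Finset.mem_univ i)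
          rcases mul_eq_zero.mp this with h' | h'
          · exact absurd h' (ne_of_gt hi)
          · exact h'
        have : (μs i).f t = 1 := by
          have := (μs i).sum_one
          rwa [finsum_eq_single _ t hzero] at this
        rw [this, ProbDist.point_f, if_pos rfl]
      · have hsum0 : ∑ j, p j * (μs j).f t = 0 := by
          rw [← hμ, hs, ProbDist.point_f, if_neg hts]
        have := (Finset.sum_eq_zero_iff_of_nonneg
          (fun j _ => mul_nonneg (hp j).1 ((μs j).nonneg t))).mp hsum0 i (Finset.mem_univ i)
        rw [ProbDist.point_f, if_neg hts]
        rcases mul_eq_zero.mp this with h' | h'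
        · exact absurd h' (ne_of_gt hi)
        · exact h'
    -- there is some index with positive weight; get a default distribution related to s
    have hex : ∃ i, 0 < p i := by
      by_contra hc
      push_neg at hc
      have : ∑ i, p i = 0 := Finset.sum_eq_zero (fun i _ => le_antisymm (hc i) (hp i).1)
      rw [hpsum] at this; norm_num at this
    obtain ⟨i0, hi0⟩ := hex
    obtain ⟨m0, q0, w0, hq0, hq0s, hR0, _⟩ := ih i0 s (key i0 hi0)
    have hm0 : 0 < m0 := by
      rcases Nat.eq_zero_or_pos m0 with rfl | h'
      · simp at hq0s
      · exact h'
    set d : ProbDist S := w0 ⟨0, hm0⟩ with hd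
    have hRd : R s d := hR0 _
    -- decomposition data for every index
    have Dec : ∀ i : Fin n, ∃ (m : ℕ) (q : Fin m → ℝ) (ws : Fin m → ProbDist S),
        (∀ j, q j ∈ Set.Icc (0:ℝ) 1) ∧ (∑ j, q j = 1) ∧ (∀ j, R s (ws j)) ∧
        (0 < p i → ∀ t, (νs i).f t = ∑ j, q j * (ws j).f t) := by
      intro i
      by_cases hi : 0 < p i
      · obtain ⟨m, q, ws, h1, h2, h3, h4⟩ := ih i s (key i hi)
        exact ⟨m, q, ws, h1, h2, h3, fun _ => h4⟩
      · exact ⟨1, fun _ => 1, fun _ => d, by simp, by simp, fun _ => hRd,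
          fun h' => absurd h' hi⟩
    choose m q ws hq hqs hRw heq using Dec
    -- assemble over the sigma type
    let N := Fintype.card ((i : Fin n) × Fin (m i))
    let e : Fin N ≃ (i : Fin n) × Fin (m i) := (Fintype.equivFin _).symm
    refine ⟨N, fun k => p (e k).1 * q (e k).1 (e k).2, fun k => ws (e k).1 (e k).2,
      ?_, ?_, fun k => hRw _ _, ?_⟩
    · intro k
      constructor
      · exact mul_nonneg (hp _).1 (hq _ _).1
      · exact mul_le_one₀ (hp _).2 (hq _ _).1 (hq _ _).2
    · rw [Equiv.sum_comp e (fun σ : (i : Fin n) × Fin (m i) => p σ.1 * q σ.1 σ.2)]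
      rw [← Finset.univ_sigma_univ, Finset.sum_sigma]
      calc ∑ i, ∑ j, p i * q i j = ∑ i, p i * ∑ j, q i j := by
            simp [Finset.mul_sum]
        _ = 1 := by simp [hqs, hpsum]
    · intro t
      rw [hν t]
      rw [Equiv.sum_comp e (fun σ : (i : Fin n) × Fin (m i) => p σ.1 * q σ.1 σ.2 * (ws σ.1 σ.2).f t)]
      rw [← Finset.univ_sigma_univ, Finset.sum_sigma]
      apply Finset.sum_congr rfl
      intro i _
      rcases eq_or_lt_of_le (hp i).1 with h0 | h0
      · simp [← h0]
      · rw [heq i h0 t, Finset.mul_sum]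
        ring_nf

/-- If `δ_s lift(R) μ` then `μ` is a convex combination of distributions each related
to `s` by `R`. -/
theorem lift_point_decomposition {S : Type} (R : S → ProbDist S → Prop)
    (s : S) (μ : ProbDist S) (h : ProbDist.Lift R (ProbDist.point s) μ) :
    ∃ (n : ℕ) (p : Fin n → ℝ) (μs : Fin n → ProbDist S),
      (∀ i, p i ∈ Set.Icc (0 : ℝ) 1) ∧ (∑ i, p i = 1) ∧
      (∀ i, R s (μs i)) ∧
      (∀ t, μ.f t = ∑ i, p i * (μs i).f t) :=
  aux_decomp R h s (fun _ => rfl)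
end

section
/- Let S be a set and R an equivalence relation on S. For all μ, ν ∈ D(S), μ is related to ν by the lifting of R to D(S) × D(S) if and only if for every R-equivalence class C ⊆ S, ∑_{s∈C} μ(s) = ∑_{s∈C} ν(s). -/
open Function Set

lemma classSum_eq_finset {S : Type} (f : S → ℝ) (C : Set S) (F : Finset S)
    [DecidablePred (· ∈ C)] (hsupp : ∀ x, f x ≠ 0 → x ∈ F) :
    ∑ᶠ t ∈ C, f t = ∑ t ∈ F.filter (· ∈ C), f t := by
  apply finsum_mem_eq_sum_of_inter_support_eq
  ext x
  simp only [Set.mem_inter_iff, Function.mem_support, Finset.coe_filter,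
    Set.mem_setOf_eq]
  tauto

lemma classSum_point_mem {S : Type} {s : S} {C : Set S} (hs : s ∈ C) :
    ∑ᶠ t ∈ C, (ProbDist.point s).f t = 1 := by
  classical
  rw [classSum_eq_finset _ C {s} (by
    intro x hx
    by_contra h
    simp only [Finset.mem_singleton] at h
    exact hx (show Set.indicator {s} (fun _ => (1:ℝ)) x = 0 from
      Set.indicator_of_notMem (by simpa using h) _))]
  rw [Finset.filter_singleton]
  simp [hs, ProbDist.point, Set.indicator_of_mem]

lemma classSum_point_not_mem {S : Type} {s : S} {C : Set S} (hs : s ∉ C) :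
    ∑ᶠ t ∈ C, (ProbDist.point s).f t = 0 := by
  apply finsum_mem_of_eqOn_zero
  intro x hx
  have : x ≠ s := fun h => hs (h ▸ hx)
  simp [ProbDist.point, Set.indicator_of_notMem, this]

lemma classSum_combo {S : Type} {n : ℕ} (p : Fin n → ℝ) (μs : Fin n → ProbDist S)
    (C : Set S) :
    ∑ᶠ t ∈ C, (∑ i, p i * (μs i).f t) = ∑ i, p i * ∑ᶠ t ∈ C, (μs i).f t := by
  classical
  set F : Finset S := Finset.univ.biUnion (fun i : Fin n => (μs i).finSupp.toFinset) with hF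
  have hsub : ∀ i, ∀ x, (μs i).f x ≠ 0 → x ∈ F := fun i x hx =>
    Finset.mem_biUnion.2 ⟨i, Finset.mem_univ _, (Set.Finite.mem_toFinset _).2 hx⟩
  rw [classSum_eq_finset _ C F (by
    intro x hx
    by_contra h
    exact hx (Finset.sum_eq_zero fun i _ => by
      rw [of_not_not (fun h0 => h (hsub i x h0))]; ring))]
  rw [Finset.sum_comm]
  refine Finset.sum_congr rfl fun i _ => ?_
  rw [classSum_eq_finset _ C F (hsub i), Finset.mul_sum]

lemma lift_forward {S : Type} (R : S → S → Prop) (hR : Equivalence R)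
    {μ ν : ProbDist S} (h : ProbDist.LiftRel R μ ν) :
    ∀ s : S, ∑ᶠ t ∈ {t | R s t}, μ.f t = ∑ᶠ t ∈ {t | R s t}, ν.f t := by
  induction h with
  | @basic s ν hb =>
    obtain ⟨t, hst, rfl⟩ := hb
    intro s0
    by_cases h0 : R s0 s
    · rw [classSum_point_mem (C := {t | R s0 t}) h0,
        classSum_point_mem (C := {t | R s0 t}) (hR.trans h0 hst)]
    · rw [classSum_point_not_mem (C := {t | R s0 t}) h0,
        classSum_point_not_mem (C := {t | R s0 t})
          (fun hc => h0 (hR.trans hc (hR.symm hst)))]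
  | @lin n p μs νs hp hpsum hl μ ν hμ hν ih =>
    intro s0
    rw [finsum_mem_congr rfl (fun t _ => hμ t), finsum_mem_congr rfl (fun t _ => hν t),
      classSum_combo, classSum_combo]
    exact Finset.sum_congr rfl fun i _ => by rw [ih i s0]

lemma lift_backward {S : Type} (R : S → S → Prop) (hR : Equivalence R)
    {μ ν : ProbDist S}
    (h : ∀ s : S, ∑ᶠ t ∈ {t | R s t}, μ.f t = ∑ᶠ t ∈ {t | R s t}, ν.f t) :
    ProbDist.LiftRel R μ ν := by
  classical
  set Fμ := μ.finSupp.toFinset with hFμ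
  set Fν := ν.finSupp.toFinset with hFν
  set m : S → ℝ := fun s => ∑ᶠ t ∈ {t | R s t}, μ.f t with hm
  set w : S × S → ℝ := fun q => μ.f q.1 * ν.f q.2 / m q.1 with hw
  set F : Finset (S × S) := (Fμ ×ˢ Fν).filter (fun q => R q.1 q.2) with hFdef
  have hmemμ : ∀ x, μ.f x ≠ 0 → x ∈ Fμ := fun x hx => (Set.Finite.mem_toFinset _).2 hx
  have hmemν : ∀ x, ν.f x ≠ 0 → x ∈ Fν := fun x hx => (Set.Finite.mem_toFinset _).2 hx
  have hmμ : ∀ s, m s = ∑ t ∈ Fμ.filter (fun t => R s t), μ.f t := fun s =>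
    classSum_eq_finset μ.f {t | R s t} Fμ hmemμ
  have hmν : ∀ s, m s = ∑ t ∈ Fν.filter (fun t => R s t), ν.f t := fun s =>
    (h s).trans (classSum_eq_finset ν.f {t | R s t} Fν hmemν)
  have hm_nonneg : ∀ s, 0 ≤ m s := fun s => by
    rw [hmμ]; exact Finset.sum_nonneg fun t _ => μ.nonneg t
  have hμpos : ∀ s, μ.f s ≠ 0 → 0 < m s := by
    intro s hs
    have h1 : 0 < μ.f s := lt_of_le_of_ne (μ.nonneg s) (Ne.symm hs)
    have h2 : s ∈ Fμ.filter (fun t => R s t) :=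
      Finset.mem_filter.2 ⟨hmemμ s hs, hR.refl s⟩
    calc 0 < μ.f s := h1
      _ ≤ ∑ t ∈ Fμ.filter (fun t => R s t), μ.f t :=
          Finset.single_le_sum (fun t _ => μ.nonneg t) h2
      _ = m s := (hmμ s).symm
  have hνpos : ∀ s, ν.f s ≠ 0 → 0 < m s := by
    intro s hs
    have h1 : 0 < ν.f s := lt_of_le_of_ne (ν.nonneg s) (Ne.symm hs)
    have h2 : s ∈ Fν.filter (fun t => R s t) :=
      Finset.mem_filter.2 ⟨hmemν s hs, hR.refl s⟩
    calc 0 < ν.f s := h1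
      _ ≤ ∑ t ∈ Fν.filter (fun t => R s t), ν.f t :=
          Finset.single_le_sum (fun t _ => ν.nonneg t) h2
      _ = m s := (hmν s).symm
  have hclass : ∀ a b, R a b → m a = m b := by
    intro a b hab
    have : {t | R a t} = {t | R b t} := by
      ext t
      exact ⟨fun ht => hR.trans (hR.symm hab) ht, fun ht => hR.trans hab ht⟩
    show (∑ᶠ t ∈ {t | R a t}, μ.f t) = ∑ᶠ t ∈ {t | R b t}, μ.f t
    rw [this]
  have hrow : ∀ a, ∑ b ∈ Fν.filter (fun b => R a b), w (a, b) = μ.f a := by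
    intro a
    have : ∑ b ∈ Fν.filter (fun b => R a b), w (a, b)
        = μ.f a * (∑ b ∈ Fν.filter (fun b => R a b), ν.f b) / m a := by
      rw [Finset.mul_sum, Finset.sum_div]
    rw [this, ← hmν a]
    by_cases h0 : μ.f a = 0
    · simp [h0]
    · rw [mul_div_assoc, div_self (ne_of_gt (hμpos a h0)), mul_one]
  have hcol : ∀ b, ∑ a ∈ Fμ.filter (fun a => R a b), w (a, b) = ν.f b := by
    intro b
    have h1 : ∑ a ∈ Fμ.filter (fun a => R a b), w (a, b)
        = ∑ a ∈ Fμ.filter (fun a => R a b), μ.f a * ν.f b / m b := by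
      refine Finset.sum_congr rfl fun a ha => ?_
      rw [hw]
      simp only []
      rw [hclass a b (Finset.mem_filter.1 ha).2]
    have h2 : Fμ.filter (fun a => R a b) = Fμ.filter (fun a => R b a) :=
      Finset.filter_congr fun a _ => ⟨fun hx => hR.symm hx, fun hx => hR.symm hx⟩
    rw [h1, ← Finset.sum_div, ← Finset.sum_mul, h2, ← hmμ b]
    by_cases h0 : ν.f b = 0
    · simp [h0]
    · rw [mul_comm, mul_div_assoc, div_self (ne_of_gt (hνpos b h0)), mul_one]
  have hFsum : ∀ g : S × S → ℝ,
      ∑ q ∈ F, g q = ∑ a ∈ Fμ, ∑ b ∈ Fν.filter (fun b => R a b), g (a, b) := by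
    intro g
    rw [hFdef, Finset.sum_filter, Finset.sum_product]
    exact Finset.sum_congr rfl fun a _ => (Finset.sum_filter _ _).symm
  have hFsum' : ∀ g : S × S → ℝ,
      ∑ q ∈ F, g q = ∑ b ∈ Fν, ∑ a ∈ Fμ.filter (fun a => R a b), g (a, b) := by
    intro g
    rw [hFdef, Finset.sum_filter, Finset.sum_product, Finset.sum_comm]
    exact Finset.sum_congr rfl fun b _ => (Finset.sum_filter _ _).symm
  have hpt : ∀ a s : S, (ProbDist.point a).f s = if a = s then 1 else 0 := by
    intro a s
    by_cases hs : a = s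
    · subst hs; simp [ProbDist.point]
    · have hns : s ∉ ({a} : Set S) := fun hc => hs (Set.mem_singleton_iff.1 hc).symm
      simp [ProbDist.point, Set.indicator_of_notMem hns, hs]
  have hμmarg : ∀ s, ∑ q ∈ F, w q * (ProbDist.point q.1).f s = μ.f s := by
    intro s
    rw [hFsum]
    have : ∀ a ∈ Fμ, ∑ b ∈ Fν.filter (fun b => R a b), w (a, b) * (ProbDist.point a).f s
        = if a = s then μ.f a else 0 := by
      intro a _
      by_cases ha : a = s
      · simp only [ha, if_true, hpt, mul_one]
        exact hrow s
      · simp [hpt, ha]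
    rw [Finset.sum_congr rfl this, Finset.sum_ite_eq' Fμ s (fun a => μ.f a)]
    by_cases hs : s ∈ Fμ
    · simp [hs]
    · simp only [hs, if_false]
      by_contra hc
      exact hs (hmemμ s (fun h0 => hc h0.symm))
  have hνmarg : ∀ s, ∑ q ∈ F, w q * (ProbDist.point q.2).f s = ν.f s := by
    intro s
    rw [hFsum']
    have : ∀ b ∈ Fν, ∑ a ∈ Fμ.filter (fun a => R a b), w (a, b) * (ProbDist.point b).f s
        = if b = s then ν.f b else 0 := by
      intro b _
      by_cases hb : b = s
      · simp only [hb, if_true, hpt, mul_one]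
        exact hcol s
      · simp [hpt, hb]
    rw [Finset.sum_congr rfl this, Finset.sum_ite_eq' Fν s (fun b => ν.f b)]
    by_cases hs : s ∈ Fν
    · simp [hs]
    · simp only [hs, if_false]
      by_contra hc
      exact hs (hmemν s (fun h0 => hc h0.symm))
  have hptot : ∑ q ∈ F, w q = 1 := by
    rw [hFsum, Finset.sum_congr rfl (fun a _ => hrow a), ← finsum_eq_sum μ.f μ.finSupp]
    exact μ.sum_one
  -- build the lifting
  set n := F.card with hn
  set e : Fin n ≃ {x // x ∈ F} := F.equivFin.symm with he
  have hconv : ∀ g : S × S → ℝ, ∑ i, g ((e i : S × S)) = ∑ q ∈ F, g q := by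
    intro g
    rw [← Finset.sum_coe_sort F g]
    exact Equiv.sum_comp e (fun x => g x)
  have hwnn : ∀ q : S × S, 0 ≤ w q := fun q =>
    div_nonneg (mul_nonneg (μ.nonneg _) (ν.nonneg _)) (hm_nonneg _)
  refine ProbDist.Lift.lin (fun i => w (e i : S × S))
    (fun i => ProbDist.point (e i : S × S).1)
    (fun i => ProbDist.point (e i : S × S).2) ?_ ?_ ?_ ?_ ?_
  · intro i
    constructor
    · exact hwnn _
    · calc w (e i : S × S) ≤ ∑ j, w (e j : S × S) :=
          Finset.single_le_sum (f := fun j : Fin n => w (e j : S × S))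
            (fun j _ => hwnn _) (Finset.mem_univ i)
        _ = 1 := by rw [hconv w, hptot]
  · rw [hconv w, hptot]
  · intro i
    have hmem : (e i : S × S) ∈ (Fμ ×ˢ Fν).filter (fun q => R q.1 q.2) := (e i).2
    exact ProbDist.Lift.basic ⟨(e i : S × S).2, (Finset.mem_filter.mp hmem).2, rfl⟩
  · intro s
    rw [← hμmarg s, ← hconv (fun q => w q * (ProbDist.point q.1).f s)]
  · intro s
    rw [← hνmarg s, ← hconv (fun q => w q * (ProbDist.point q.2).f s)]

/-- For an equivalence relation `R` on `S`, two distributions are related by the lifting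
of `R` iff they assign the same probability to every `R`-equivalence class. -/
theorem liftRel_equiv_iff_classes {S : Type} (R : S → S → Prop) (hR : Equivalence R)
    (μ ν : ProbDist S) :
    ProbDist.LiftRel R μ ν ↔
      ∀ s : S, ∑ᶠ t ∈ {t | R s t}, μ.f t = ∑ᶠ t ∈ {t | R s t}, ν.f t := by
  exact ⟨lift_forward R hR, lift_backward R hR⟩
end

section
/- Let S be a set and R an equivalence relation on S. Then the lifting of R to D(S) × D(S) is an equivalence relation on D(S): it is reflexive, symmetric, and transitive. -/
namespace LiftAux

open Function
open scoped Classical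

variable {S : Type}

lemma point_apply (t s : S) : (ProbDist.point t).f s = if s = t then 1 else 0 := by
  simp only [ProbDist.point, Set.indicator_apply, Set.mem_singleton_iff]

/-- the measure of the `R`-class of `s` under `μ` -/
noncomputable def cm (R : S → S → Prop) (μ : ProbDist S) (s : S) : ℝ :=
  ∑ᶠ t, if R s t then μ.f t else 0

lemma cm_support_subset (R : S → S → Prop) (μ : ProbDist S) (s : S) :
    Function.support (fun t => if R s t then μ.f t else 0) ⊆ Function.support μ.f := by
  intro t ht
  simp only [Function.mem_support] at ht ⊢
  intro h
  apply ht
  simp [h]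

lemma cm_support_finite (R : S → S → Prop) (μ : ProbDist S) (s : S) :
    (Function.support (fun t => if R s t then μ.f t else 0)).Finite :=
  μ.finSupp.subset (cm_support_subset R μ s)

lemma cm_nonneg (R : S → S → Prop) (μ : ProbDist S) (s : S) : 0 ≤ cm R μ s :=
  finsum_nonneg fun t => by split <;> simp [μ.nonneg]

lemma le_cm {R : S → S → Prop} (hR : Equivalence R) (μ : ProbDist S) (s : S) :
    μ.f s ≤ cm R μ s := by
  have h := single_le_finsum s (cm_support_finite R μ s)
    (fun j => by split <;> simp [μ.nonneg])
  simpa [hR.refl s, cm] using h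

lemma cm_congr {R : S → S → Prop} (hR : Equivalence R) (μ : ProbDist S) {s s' : S}
    (h : R s s') : cm R μ s = cm R μ s' := by
  apply finsum_congr
  intro t
  have : R s t ↔ R s' t := ⟨fun h1 => hR.trans (hR.symm h) h1, fun h1 => hR.trans h h1⟩
  simp only [this]

lemma cm_point {R : S → S → Prop} (u s : S) :
    cm R (ProbDist.point u) s = if R s u then 1 else 0 := by
  unfold cm
  rw [finsum_eq_single _ u]
  · simp [point_apply]
  · intro x hx
    simp [point_apply, hx]

lemma f_le_one (μ : ProbDist S) (s : S) : μ.f s ≤ 1 := by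
  have h := single_le_finsum s μ.finSupp μ.nonneg
  rwa [μ.sum_one] at h

/-- Enumeration of the support of a distribution. -/
lemma exists_enum (μ : ProbDist S) :
    ∃ (n : ℕ) (e : Fin n → S), Function.Injective e ∧
      (∀ u, μ.f u ≠ 0 → ∃ i, e i = u) ∧ (∀ i, μ.f (e i) ≠ 0) := by
  classical
  set T : Finset S := μ.finSupp.toFinset with hT
  refine ⟨Fintype.card T, fun i => ((Fintype.equivFin T).symm i : S), ?_, ?_, ?_⟩
  · intro i j hij
    exact (Equiv.injective (Fintype.equivFin T).symm) (Subtype.ext hij)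
  · intro u hu
    have : u ∈ T := by simpa [hT] using μ.finSupp.mem_toFinset.2 hu
    exact ⟨Fintype.equivFin T ⟨u, this⟩, by simp⟩
  · intro i
    exact Function.mem_support.1 (μ.finSupp.mem_toFinset.1 ((Fintype.equivFin T).symm i).2)

lemma finsum_eq_sum_enum (μ : ProbDist S) {n : ℕ} {e : Fin n → S}
    (hinj : Function.Injective e) (hcov : ∀ u, μ.f u ≠ 0 → ∃ i, e i = u)
    (g : S → ℝ) (hg : ∀ u, μ.f u = 0 → g u = 0) :
    ∑ᶠ u, g u = ∑ i, g (e i) := by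
  classical
  rw [finsum_eq_finset_sum_of_support_subset g (s := Finset.univ.image e) ?_]
  · rw [Finset.sum_image (fun x _ y _ h => hinj h)]
  · intro u hu
    have hμu : μ.f u ≠ 0 := by
      intro h0
      exact hu (hg u h0)
    obtain ⟨i, rfl⟩ := hcov u hμu
    simp

lemma decomp (μ : ProbDist S) {n : ℕ} {e : Fin n → S}
    (hinj : Function.Injective e) (hcov : ∀ u, μ.f u ≠ 0 → ∃ i, e i = u) (s : S) :
    μ.f s = ∑ i, μ.f (e i) * (ProbDist.point (e i)).f s := by
  classical
  simp only [point_apply]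
  by_cases hs : ∃ j, e j = s
  · obtain ⟨j, rfl⟩ := hs
    rw [Finset.sum_eq_single j]
    · simp
    · intro b _ hb
      have : e j ≠ e b := fun h => hb (hinj h).symm
      simp [this]
    · simp
  · have h0 : μ.f s = 0 := by
      by_contra h
      exact hs (hcov s h)
    rw [h0]
    symm
    apply Finset.sum_eq_zero
    intro i _
    have : s ≠ e i := fun h => hs ⟨i, h.symm⟩
    simp [this]

/-- If `ρ` is supported in the `R`-class of `s`, then `δ_s` is lifted-related to `ρ`. -/
lemma lift_point {R : S → S → Prop} (s : S) (ρ : ProbDist S)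
    (hcl : ∀ t, ρ.f t ≠ 0 → R s t) :
    ProbDist.LiftRel R (ProbDist.point s) ρ := by
  obtain ⟨n, e, hinj, hcov, hpos⟩ := exists_enum ρ
  refine ProbDist.Lift.lin (fun i => ρ.f (e i)) (fun _ => ProbDist.point s)
    (fun i => ProbDist.point (e i)) (fun i => ⟨ρ.nonneg _, f_le_one ρ _⟩) ?_ ?_ ?_ ?_
  · rw [← finsum_eq_sum_enum ρ hinj hcov ρ.f (fun u h => h)]
    exact ρ.sum_one
  · intro i
    exact ProbDist.Lift.basic ⟨e i, hcl (e i) (hpos i), rfl⟩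
  · intro t
    rw [← Finset.sum_mul, ← finsum_eq_sum_enum ρ hinj hcov ρ.f (fun u h => h), ρ.sum_one,
      one_mul]
  · exact decomp ρ hinj hcov

/-- `ν` restricted (and renormalized) to the `R`-class of `s`. -/
noncomputable def restrict (R : S → S → Prop) (ν : ProbDist S) (s : S)
    (h : cm R ν s ≠ 0) : ProbDist S where
  f := fun t => (if R s t then ν.f t else 0) / cm R ν s
  nonneg t := div_nonneg (by split <;> simp [ν.nonneg]) (cm_nonneg R ν s)
  finSupp := (cm_support_finite R ν s).subset (by
    intro t ht
    simp only [Function.mem_support] at ht ⊢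
    intro h0
    apply ht
    rw [h0, zero_div])
  sum_one := by
    classical
    have hfin := cm_support_finite R ν s
    have hsub : Function.support (fun t => (if R s t then ν.f t else 0) / cm R ν s)
        ⊆ (hfin.toFinset : Set S) := by
      intro t ht
      simp only [Function.mem_support] at ht
      rw [Set.Finite.coe_toFinset, Function.mem_support]
      intro h0
      apply ht
      rw [h0, zero_div]
    rw [finsum_eq_finset_sum_of_support_subset _ hsub, ← Finset.sum_div]
    rw [← finsum_eq_finset_sum_of_support_subset _
      (by rw [Set.Finite.coe_toFinset] : Function.support (fun t => if R s t then ν.f t else 0) ⊆ (hfin.toFinset : Set S))]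
    exact div_self h

lemma restrict_mem_class {R : S → S → Prop} {ν : ProbDist S} {s : S} {h : cm R ν s ≠ 0}
    (t : S) (ht : (restrict R ν s h).f t ≠ 0) : R s t := by
  by_contra hc
  apply ht
  simp [restrict, hc]

/-- Key construction: if `μ` and `ν` give the same measure to every `R`-class,
then `μ` is lifted-related to `ν`. -/
lemma lift_of_cm_eq {R : S → S → Prop} (hR : Equivalence R) (μ ν : ProbDist S)
    (h : ∀ s, cm R μ s = cm R ν s) : ProbDist.LiftRel R μ ν := by
  classical
  obtain ⟨n, e, hinj, hcov, hpos⟩ := exists_enum μ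
  have hcmne : ∀ i, cm R ν (e i) ≠ 0 := by
    intro i
    rw [← h (e i)]
    have h1 : μ.f (e i) ≤ cm R μ (e i) := le_cm hR μ (e i)
    have h2 : 0 < μ.f (e i) := lt_of_le_of_ne (μ.nonneg _) (Ne.symm (hpos i))
    exact ne_of_gt (lt_of_lt_of_le h2 h1)
  refine ProbDist.Lift.lin (fun i => μ.f (e i)) (fun i => ProbDist.point (e i))
    (fun i => restrict R ν (e i) (hcmne i))
    (fun i => ⟨μ.nonneg _, f_le_one μ _⟩) ?_ ?_ ?_ ?_
  · rw [← finsum_eq_sum_enum μ hinj hcov μ.f (fun u h => h)]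
    exact μ.sum_one
  · intro i
    exact lift_point (e i) _ (restrict_mem_class)
  · exact decomp μ hinj hcov
  · intro t
    have key : ∀ i, μ.f (e i) * (restrict R ν (e i) (hcmne i)).f t
        = (if R (e i) t then μ.f (e i) else 0) * (ν.f t / cm R μ t) := by
      intro i
      by_cases hit : R (e i) t
      · have hcm : cm R ν (e i) = cm R μ t := by
          rw [← h (e i)]
          exact cm_congr hR μ hit
        simp only [restrict, hit, if_true, hcm]
        try ring
      · simp [restrict, hit]
    simp only [key]
    rw [← Finset.sum_mul]
    have hsum : (∑ i, if R (e i) t then μ.f (e i) else 0) = cm R μ t := by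
      have heq := finsum_eq_sum_enum μ hinj hcov (fun u => if R t u then μ.f u else 0)
        (fun u h0 => by by_cases hru : R t u <;> simp [hru, h0])
      unfold cm
      rw [heq]
      apply Finset.sum_congr rfl
      intro i _
      have : R t (e i) ↔ R (e i) t := ⟨hR.symm, hR.symm⟩
      simp only [this]
    rw [hsum]
    by_cases hct : cm R μ t = 0
    · have hν0 : ν.f t = 0 := by
        have h1 : ν.f t ≤ cm R ν t := le_cm hR ν t
        rw [← h t, hct] at h1
        exact le_antisymm h1 (ν.nonneg t)
      rw [hν0, hct]
      ring
    · rw [mul_div_cancel₀ _ hct]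

/-- The class measures are invariants of the lifting. -/
lemma cm_eq_of_lift {R : S → S → Prop} (hR : Equivalence R) {μ ν : ProbDist S}
    (hl : ProbDist.LiftRel R μ ν) : ∀ s, cm R μ s = cm R ν s := by
  induction hl with
  | @basic s' ν' h =>
    obtain ⟨t, hst, rfl⟩ := h
    intro s
    rw [cm_point, cm_point]
    have : R s s' ↔ R s t := ⟨fun h1 => hR.trans h1 hst, fun h1 => hR.trans h1 (hR.symm hst)⟩
    simp only [this]
  | @lin m p μs νs hp hpsum hlift μ' ν' hμ hν ih =>
    intro s
    have expand : ∀ (ξ : ProbDist S) (ξs : _ → ProbDist S),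
        (∀ u, ξ.f u = ∑ i, p i * (ξs i).f u) →
        cm R ξ s = ∑ i, p i * cm R (ξs i) s := by
      intro ξ ξs hξ
      unfold cm
      have h1 : ∀ t, (if R s t then ξ.f t else 0)
          = ∑ i, (if R s t then p i * (ξs i).f t else 0) := by
        intro t
        by_cases hst : R s t
        · simp only [hst, if_true, hξ t]
        · simp [hst]
      rw [finsum_congr h1]
      rw [finsum_sum_comm Finset.univ (fun t i => if R s t then p i * (ξs i).f t else 0) ?_]
      · apply Finset.sum_congr rfl
        intro i _
        have h2 : ∀ t, (if R s t then p i * (ξs i).f t else 0)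
            = p i * (if R s t then (ξs i).f t else 0) := by
          intro t
          split <;> simp
        rw [finsum_congr h2, mul_finsum _ _]
      · intro i _
        apply ((ξs i).finSupp.subset ?_)
        intro t ht
        simp only [Function.mem_support] at ht ⊢
        intro h0
        apply ht
        simp [h0]
    rw [expand μ' μs hμ, expand ν' νs hν]
    apply Finset.sum_congr rfl
    intro i _
    rw [ih i s]

end LiftAux

/-- The lifting of an equivalence relation on `S` is an equivalence relation on `D(S)`:
it is reflexive, symmetric and transitive. -/
theorem liftRel_equivalence {S : Type} (R : S → S → Prop) (hR : Equivalence R) :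
    Equivalence (ProbDist.LiftRel R) := by
  constructor
  · intro μ
    exact LiftAux.lift_of_cm_eq hR μ μ (fun _ => rfl)
  · intro μ ν h
    exact LiftAux.lift_of_cm_eq hR ν μ (fun s => (LiftAux.cm_eq_of_lift hR h s).symm)
  · intro μ ν ξ h1 h2
    exact LiftAux.lift_of_cm_eq hR μ ξ
      (fun s => (LiftAux.cm_eq_of_lift hR h1 s).trans (LiftAux.cm_eq_of_lift hR h2 s))
end
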